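/- Let F_q be a finite field with q ≡ 1 (mod 4) elements, of odd characteristic p. Let a_1,...,a_{(q-1)/2} be all nonzero squares in F_q. Then det[(a_i + a_j)^{(q-3)/2}]_{1≤i,j≤(q-1)/2} = (-1)^{(q+3)/4} · u² in F_q, where u = ∏_{s=0}^{(q-5)/4} binom((q-3)/2, s) reduced mod p. -/

import Mathlib

open Finset Matrix

lemma det_add_pow {F : Type*} [Field F] {n : ℕ} (a : Fin n → F)
    (ha : Function.Injective a) (h1 : ∀ i, a i ^ n = 1) :
    Matrix.det (Matrix.of fun i j : Fin n => (a i + a j) ^ (n - 1))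
      = (∏ k : Fin n, ((n - 1).choose (k : ℕ) : F)) * ∏ i, ((n : F) * a i ^ (n - 1)) := by
  set A : Matrix (Fin n) (Fin n) F := Matrix.of fun i k => a i ^ (k : ℕ) with hA
  set C : Matrix (Fin n) (Fin n) F := Matrix.of fun k j => a j ^ (n - 1 - (k : ℕ)) with hC
  set D : Matrix (Fin n) (Fin n) F :=
    Matrix.diagonal fun k : Fin n => ((n - 1).choose (k : ℕ) : F) with hD
  have hM : (Matrix.of fun i j : Fin n => (a i + a j) ^ (n - 1)) = A * (D * C) := by
    ext i j
    have hn : n - 1 + 1 = n := Nat.succ_pred_eq_of_pos i.pos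
    have : ∀ k : Fin n, (A * (D * C)) i j =
        ∑ k : Fin n, a i ^ (k : ℕ) * (((n - 1).choose (k : ℕ) : F) * a j ^ (n - 1 - (k : ℕ))) := by
      intro _
      rw [Matrix.mul_apply]
      refine Finset.sum_congr rfl fun k _ => ?_
      rw [Matrix.diagonal_mul]
      simp [hA, hC]
    rw [this i, Fin.sum_univ_eq_sum_range (fun k => a i ^ k * (((n - 1).choose k : F) * a j ^ (n - 1 - k)))]
    rw [Matrix.of_apply, add_pow, hn]
    exact Finset.sum_congr rfl fun k _ => by ring
  have hAC : A * C = Matrix.diagonal fun i => (n : F) * a i ^ (n - 1) := by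
    ext i j
    rw [Matrix.mul_apply]
    rcases eq_or_ne i j with rfl | hij
    · have : ∀ k : Fin n, a i ^ (k : ℕ) * a i ^ (n - 1 - (k : ℕ)) = a i ^ (n - 1) := by
        intro k
        rw [← pow_add]
        congr 1
        omega
      simp only [hA, hC, Matrix.of_apply]
      rw [Finset.sum_congr rfl fun k _ => this k]
      simp [Matrix.diagonal_apply_eq, Finset.card_univ, nsmul_eq_mul]
    · have hs : ∑ k : Fin n, a i ^ (k : ℕ) * a j ^ (n - 1 - (k : ℕ)) = 0 := by
        have hgeo := geom_sum₂_mul (a i) (a j) n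
        rw [h1 i, h1 j, sub_self] at hgeo
        have hne : a i - a j ≠ 0 := sub_ne_zero.mpr fun h => hij (ha h)
        have := (mul_eq_zero.mp hgeo).resolve_right hne
        rw [← this, Fin.sum_univ_eq_sum_range (fun k => a i ^ k * a j ^ (n - 1 - k))]
      simpa [hA, hC, Matrix.diagonal_apply_ne _ hij] using hs
  rw [hM, Matrix.det_mul, Matrix.det_mul, hD, Matrix.det_diagonal, mul_comm (Matrix.det A),
    mul_assoc, ← Matrix.det_mul, Matrix.det_mul_comm, hAC, Matrix.det_diagonal]

lemma choose_prod_sq (t : ℕ) (ht : 0 < t) :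
    ∏ s ∈ Finset.range (2 * t), (2 * t - 1).choose s
      = (∏ s ∈ Finset.range t, (2 * t - 1).choose s) ^ 2 := by
  rw [show Finset.range (2 * t) = Finset.range (t + t) from by rw [two_mul],
    Finset.prod_range_add, sq]
  congr 1
  have h1 : ∀ s ∈ Finset.range t, (2 * t - 1).choose (t + s)
      = (2 * t - 1).choose (t - 1 - s) := by
    intro s hs
    rw [Finset.mem_range] at hs
    rw [← Nat.choose_symm (by omega)]
    congr 1
    omega
  rw [Finset.prod_congr rfl h1]
  exact Finset.prod_range_reflect (fun s => (2 * t - 1).choose s) t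

lemma stmt8_aux (F : Type*) [Field F] [Fintype F] (q n : ℕ)
    (hq : Fintype.card F = q) (h4 : q % 4 = 1) (hn : n = (q - 1) / 2)
    (a : Fin n → F) (ha : Function.Injective a)
    (hsq : ∀ x : F, (∃ i, a i = x) ↔ x ≠ 0 ∧ ∃ y : F, y ^ 2 = x) :
    Matrix.det (Matrix.of fun i j : Fin n => (a i + a j) ^ ((q - 3) / 2))
      = (-1) ^ ((q + 3) / 4) *
        (∏ s ∈ Finset.range ((q - 5) / 4 + 1), (Nat.choose ((q - 3) / 2) s : F)) ^ 2 := by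
  classical
  have hq2 : 2 ≤ q := hq ▸ Fintype.one_lt_card
  have hq5 : 5 ≤ q := by omega
  have hchar : ringChar F ≠ 2 := fun h => by
    have h2 := FiniteField.even_card_iff_char_two.mp h
    rw [hq] at h2; omega
  have h2ne : (2 : F) ≠ 0 := Ring.two_ne_zero hchar
  have hne11 : (1 : F) ≠ -1 := fun h => h2ne (by linear_combination h)
  have hai : ∀ i, a i ≠ 0 ∧ ∃ y : F, y ^ 2 = a i := fun i => (hsq (a i)).mp ⟨i, rfl⟩
  have h1 : ∀ i, a i ^ n = 1 := by
    intro i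
    obtain ⟨hne, y, hy⟩ := hai i
    have hy0 : y ≠ 0 := by rintro rfl; rw [← hy] at hne; simp at hne
    rw [← hy, ← pow_mul, show 2 * n = q - 1 from by omega, ← hq]
    exact FiniteField.pow_card_sub_one_eq_one y hy0
  -- the product of all nonzero squares is -1
  set S : Finset F := Finset.univ.filter (fun x => x ≠ 0 ∧ ∃ y : F, y ^ 2 = x) with hS
  have hmemS : ∀ x : F, x ∈ S ↔ (x ≠ 0 ∧ ∃ y : F, y ^ 2 = x) := fun x => by simp [hS]
  have himg : Finset.univ.image a = S := by
    ext x
    simp only [Finset.mem_image, Finset.mem_univ, true_and]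
    rw [hmemS, ← hsq]
  have h1S : (1 : F) ∈ S := (hmemS 1).mpr ⟨one_ne_zero, 1, one_pow 2⟩
  have hm1S : (-1 : F) ∈ S := by
    refine (hmemS _).mpr ⟨neg_ne_zero.mpr one_ne_zero, ?_⟩
    obtain ⟨r, hr⟩ := (FiniteField.isSquare_neg_one_iff (F := F)).mpr (by rw [hq]; omega)
    exact ⟨r, by rw [sq]; exact hr.symm⟩
  have hprodS : ∏ x ∈ S, x = -1 := by
    have hsub : ({1, -1} : Finset F) ⊆ S := by
      intro x hx
      rcases Finset.mem_insert.mp hx with rfl | hx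
      · exact h1S
      · rw [Finset.mem_singleton] at hx; subst hx; exact hm1S
    have h2 : ∏ x ∈ S \ {1, -1}, x = 1 := by
      have gmem : ∀ x ∈ S \ {1, -1}, x⁻¹ ∈ S \ {1, -1} := by
        intro x hx
        obtain ⟨hxS, hx2⟩ := Finset.mem_sdiff.mp hx
        obtain ⟨hx0, y, hy⟩ := (hmemS x).mp hxS
        simp only [Finset.mem_insert, Finset.mem_singleton, not_or] at hx2
        rw [Finset.mem_sdiff]
        constructor
        · refine (hmemS _).mpr ⟨inv_ne_zero hx0, y⁻¹, ?_⟩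
          rw [← hy]; rw [inv_pow]
        · simp only [Finset.mem_insert, Finset.mem_singleton, not_or]
          constructor
          · intro h; exact hx2.1 (by rw [← inv_inv x, h, inv_one])
          · intro h
            apply hx2.2
            rw [← inv_inv x, h]
            norm_num
      refine Finset.prod_involution (fun x _ => x⁻¹) ?_ ?_ (fun x hx => gmem x hx) ?_
      · intro x hx
        exact mul_inv_cancel₀ (((hmemS x).mp (Finset.mem_sdiff.mp hx).1).1)
      · intro x hx _
        obtain ⟨hxS, hx2⟩ := Finset.mem_sdiff.mp hx
        simp only [Finset.mem_insert, Finset.mem_singleton, not_or] at hx2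
        intro h
        have hx0 : x ≠ 0 := ((hmemS x).mp hxS).1
        have hxx : x * x = 1 := by
          nth_rewrite 1 [← h]
          exact inv_mul_cancel₀ hx0
        rcases mul_self_eq_one_iff.mp hxx with h' | h'
        · exact hx2.1 h'
        · exact hx2.2 h'
      · intro x _; exact inv_inv x
    calc ∏ x ∈ S, x = (∏ x ∈ S \ {1, -1}, x) * ∏ x ∈ ({1, -1} : Finset F), x :=
          (Finset.prod_sdiff hsub).symm
      _ = -1 := by rw [h2, one_mul, Finset.prod_pair hne11]; norm_num
  have hprod_a : ∏ i, a i = -1 := by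
    rw [← hprodS, ← himg]
    exact (Finset.prod_image (f := fun x : F => x) (g := a) (fun x _ y _ h => ha h)).symm
  -- value of (n : F) ^ n
  have hq0 : ((q : ℕ) : F) = 0 := by rw [← hq]; exact FiniteField.cast_card_eq_zero F
  have h2nF : (2 : F) * (n : F) = -1 := by
    have hnat : 2 * n = q - 1 := by omega
    have : ((2 * n : ℕ) : F) = ((q - 1 : ℕ) : F) := by rw [hnat]
    rw [Nat.cast_mul, Nat.cast_sub (by omega), hq0] at this
    rw [Nat.cast_ofNat] at this
    rw [this]; ring
  have h2n : (2 : F) ^ n = (-1 : F) ^ ((q - 1) / 4) := by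
    have hcard2 : Fintype.card F / 2 = n := by rw [hq]; omega
    rcases Nat.even_or_odd ((q - 1) / 4) with he | ho
    · have h8 : q % 8 = 1 := by obtain ⟨c, hc⟩ := he; omega
      have hsq2 : IsSquare (2 : F) :=
        (FiniteField.isSquare_two_iff (F := F)).mpr (by rw [hq]; omega)
      have := (FiniteField.isSquare_iff hchar h2ne).mp hsq2
      rw [hcard2] at this
      rw [this, Even.neg_one_pow he]
    · have h8 : q % 8 = 5 := by obtain ⟨c, hc⟩ := ho; omega
      have hsq2 : ¬ IsSquare (2 : F) := by
        rw [FiniteField.isSquare_two_iff (F := F), hq]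
        omega
      have hne1 : (2 : F) ^ n ≠ 1 := by
        intro h
        exact hsq2 ((FiniteField.isSquare_iff hchar h2ne).mpr (by rw [hcard2]; exact h))
      have := (FiniteField.pow_dichotomy hchar h2ne).resolve_left (by rw [hcard2]; exact hne1)
      rw [hcard2] at this
      rw [this, Odd.neg_one_pow ho]
  have hneven : Even n := ⟨(q - 1) / 4, by omega⟩
  have hnn : (n : F) ^ n = (-1 : F) ^ ((q - 1) / 4) := by
    have h1n : ((2 : F) * (n : F)) ^ n = 1 := by rw [h2nF]; exact hneven.neg_one_pow
    rw [mul_pow, h2n] at h1n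
    have hsq1 : ((-1 : F) ^ ((q - 1) / 4)) * ((-1 : F) ^ ((q - 1) / 4)) = 1 := by
      rw [← pow_add]; exact Even.neg_one_pow ⟨(q - 1) / 4, rfl⟩
    calc (n : F) ^ n = ((-1 : F) ^ ((q - 1) / 4) * (-1 : F) ^ ((q - 1) / 4)) * (n : F) ^ n := by
          rw [hsq1, one_mul]
      _ = (-1 : F) ^ ((q - 1) / 4) * ((-1 : F) ^ ((q - 1) / 4) * (n : F) ^ n) := by ring
      _ = (-1 : F) ^ ((q - 1) / 4) := by rw [h1n, mul_one]
  -- binomial product is a square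
  have hD : n = 2 * ((q - 1) / 4) := by omega
  have hb : (∏ k : Fin n, ((n - 1).choose (k : ℕ) : F))
      = (∏ s ∈ Finset.range ((q - 5) / 4 + 1), ((n - 1).choose s : F)) ^ 2 := by
    rw [Fin.prod_univ_eq_prod_range (fun k => ((n - 1).choose k : F)) n]
    rw [show (q - 5) / 4 + 1 = (q - 1) / 4 from by omega]
    have hnat : ∏ s ∈ Finset.range n, (n - 1).choose s
        = (∏ s ∈ Finset.range ((q - 1) / 4), (n - 1).choose s) ^ 2 := by
      have h := choose_prod_sq ((q - 1) / 4) (by omega)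
      rwa [← hD] at h
    exact_mod_cast congrArg (Nat.cast : ℕ → F) hnat
  -- product of a i ^ (n - 1)
  have hainv : ∏ i, a i ^ (n - 1) = -1 := by
    have : ∀ i, a i ^ (n - 1) = (a i)⁻¹ := by
      intro i
      refine eq_inv_of_mul_eq_one_left ?_
      rw [← pow_succ, show n - 1 + 1 = n from by omega]
      exact h1 i
    rw [Finset.prod_congr rfl fun i _ => this i, Finset.prod_inv_distrib, hprod_a]
    norm_num
  -- assemble
  rw [show (q - 3) / 2 = n - 1 from by omega]
  rw [det_add_pow a ha h1, Finset.prod_mul_distrib, Finset.prod_const, Finset.card_univ,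
    Fintype.card_fin, hb, hnn, hainv, show (q + 3) / 4 = (q - 1) / 4 + 1 from by omega, pow_succ]
  ring


theorem stmt_8 (F : Type*) [Field F] [Fintype F] (q : ℕ)
    (hq : Fintype.card F = q) (h4 : q % 4 = 1)
    (a : Fin ((q - 1) / 2) → F) (ha : Function.Injective a)
    (hsq : ∀ x : F, (∃ i, a i = x) ↔ x ≠ 0 ∧ ∃ y : F, y ^ 2 = x) :
    Matrix.det (Matrix.of fun i j : Fin ((q - 1) / 2) => (a i + a j) ^ ((q - 3) / 2))
      = (-1) ^ ((q + 3) / 4) *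
        (∏ s ∈ Finset.range ((q - 5) / 4 + 1), (Nat.choose ((q - 3) / 2) s : F)) ^ 2 :=
  stmt8_aux F q ((q - 1) / 2) hq h4 rfl a ha hsq
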